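/- For x < x_c = log₂(1/ln 2), the derivative difference h(x) = (ln 2)·2^x − e^x/(1+e^x) satisfies h(x) ≤ h(x_c⁻) = 1 − 1/(1+e^{−x_c}), i.e., h is bounded above on (−∞, x_c) by 1/(1+e^{x_c}). -/

import Mathlib

noncomputable section
open Real

def xc : ℝ := Real.logb 2 (1 / Real.log 2)

lemma log2_pos : (0:ℝ) < Real.log 2 := Real.log_pos (by norm_num)

/-- Core inequality via weighted AM-GM with center 1/4. -/
lemma key_u (u : ℝ) (hu : 0 < u) :
    u ^ (1 - Real.log 2) ≤ (Real.log 2)^2 * (1 + u)^2 := by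
  set l := Real.log 2 with hl
  have hl1 : l < 1 := by
    rw [hl]; calc Real.log 2 < 0.6931471808 := Real.log_two_lt_d9
    _ < 1 := by norm_num
  have hl0 : 0 < l := log2_pos
  have hllo : (0.6931471803:ℝ) < l := Real.log_two_gt_d9
  have hlhi : l < 0.6931471808 := Real.log_two_lt_d9
  -- AM-GM: u^(1-l) * (1/4)^l ≤ (1-l)*u + l*(1/4)
  have young := Real.geom_mean_le_arith_mean2_weighted (w₁ := 1 - l) (w₂ := l)
    (p₁ := u) (p₂ := 1/4) (by linarith) hl0.le hu.le (by norm_num) (by ring)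
  -- (1/4)^l = exp (l * log (1/4)) and its reciprocal bound: 4^l ≤ e ≤ 2.7182818286
  have h4 : ((1:ℝ)/4) ^ l = Real.exp (-(2 * l * l)) := by
    rw [Real.rpow_def_of_pos (by norm_num)]
    congr 1
    have : Real.log (1/4) = -(2 * l) := by
      rw [show (1:ℝ)/4 = (2:ℝ)⁻¹ ^ (2:ℕ) by norm_num, Real.log_pow, Real.log_inv, hl]
      push_cast; ring
    rw [this]; ring
  have hE : Real.exp (2 * l * l) ≤ 2.7182818286 := by
    have h1 : 2 * l * l ≤ 1 := by nlinarith
    calc Real.exp (2 * l * l) ≤ Real.exp 1 := Real.exp_le_exp.2 h1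
    _ ≤ 2.7182818286 := Real.exp_one_lt_d9.le
  have hEpos : (0:ℝ) < Real.exp (-(2 * l * l)) := Real.exp_pos _
  -- from young: u^(1-l) ≤ ((1-l)*u + l/4) * exp(2l²)
  have h2 : u ^ (1 - l) ≤ ((1 - l) * u + l * (1/4)) * Real.exp (2 * l * l) := by
    rw [h4] at young
    have h5 : u ^ (1 - l) ≤ ((1 - l) * u + l * (1/4)) / Real.exp (-(2 * l * l)) :=
      (le_div_iff₀ hEpos).2 young
    rwa [div_eq_mul_inv, ← Real.exp_neg, neg_neg] at h5
  have hExp1 : (1:ℝ) ≤ Real.exp (2 * l * l) := by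
    rw [show (1:ℝ) = Real.exp 0 by simp]
    exact Real.exp_le_exp.2 (by nlinarith)
  -- linear comparison: ((1-l)u + l/4) * E ≤ l²(1+2u) ≤ l²(1+u)²
  have h3 : ((1 - l) * u + l * (1/4)) * Real.exp (2 * l * l) ≤ l^2 * (1 + u)^2 := by
    have e1 : (1 - l) * Real.exp (2 * l * l) ≤ 2 * l^2 := by nlinarith
    have e2 : l * (1/4) * Real.exp (2 * l * l) ≤ l^2 := by nlinarith
    nlinarith [sq_nonneg u, sq_nonneg l, mul_pos (mul_pos hl0 hl0) hu]
  linarith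

/-- Pointwise derivative inequality. -/
lemma key_x (x : ℝ) :
    Real.exp x / (1 + Real.exp x)^2 ≤ (Real.log 2)^2 * (2:ℝ) ^ x := by
  set l := Real.log 2 with hl
  have hl0 : 0 < l := log2_pos
  have hu : 0 < Real.exp x := Real.exp_pos x
  have hkey := key_u (Real.exp x) hu
  have hr : Real.exp x ^ (1 - l) = Real.exp x / Real.exp (x * l) := by
    rw [Real.rpow_def_of_pos hu, Real.log_exp, mul_sub, mul_one, Real.exp_sub]
  rw [hr] at hkey
  have h2x : (2:ℝ) ^ x = Real.exp (x * l) := by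
    rw [Real.rpow_def_of_pos (by norm_num), hl, mul_comm]
  rw [h2x]
  have hd : (0:ℝ) < (1 + Real.exp x)^2 := by positivity
  rw [div_le_iff₀ hd]
  have := (div_le_iff₀ (Real.exp_pos (x * l))).1 hkey
  nlinarith [Real.exp_pos (x * l)]

/-- The difference function is monotone on ℝ. -/
lemma h_mono : Monotone (fun x : ℝ => Real.log 2 * (2:ℝ) ^ x - Real.exp x / (1 + Real.exp x)) := by
  have hderiv : ∀ x : ℝ, HasDerivAt (fun x : ℝ => Real.log 2 * (2:ℝ) ^ x -
      Real.exp x / (1 + Real.exp x))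
      ((Real.log 2)^2 * (2:ℝ) ^ x - Real.exp x / (1 + Real.exp x)^2) x := by
    intro x
    have hne : (1 + Real.exp x) ≠ 0 := by positivity
    have h1 : HasDerivAt (fun x : ℝ => Real.log 2 * (2:ℝ) ^ x)
        (Real.log 2 * ((2:ℝ) ^ x * Real.log 2)) x :=
      ((hasStrictDerivAt_const_rpow (by norm_num : (0:ℝ) < 2) x).hasDerivAt).const_mul _
    have h2 : HasDerivAt (fun x : ℝ => Real.exp x / (1 + Real.exp x))
        ((Real.exp x * (1 + Real.exp x) - Real.exp x * Real.exp x) / (1 + Real.exp x)^2) x :=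
      (Real.hasDerivAt_exp x).div ((Real.hasDerivAt_exp x).const_add 1) hne
    have := h1.sub h2
    exact this.congr_deriv (by ring)
  apply monotone_of_deriv_nonneg
  · exact fun x => (hderiv x).differentiableAt
  · intro x
    rw [(hderiv x).deriv]
    have := key_x x
    linarith

lemma exp2_xc : (2:ℝ) ^ xc = 1 / Real.log 2 := by
  exact Real.rpow_logb (by norm_num) (by norm_num) (by positivity)

theorem h_bounded_above (x : ℝ) (hx : x < xc) :
    Real.log 2 * (2:ℝ) ^ x - Real.exp x / (1 + Real.exp x) ≤ 1 / (1 + Real.exp xc) ∧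
    1 / (1 + Real.exp xc) = 1 - 1 / (1 + Real.exp (-xc)) := by
  constructor
  · have hm := h_mono hx.le
    simp only at hm
    have hxc : Real.log 2 * (2:ℝ) ^ xc - Real.exp xc / (1 + Real.exp xc)
        = 1 / (1 + Real.exp xc) := by
      rw [exp2_xc, mul_one_div, div_self (ne_of_gt log2_pos)]
      have hne : (1 + Real.exp xc) ≠ 0 := by positivity
      field_simp
      ring
    linarith [hm, hxc.le, hxc.ge]
  · have h1 : (1 + Real.exp xc) ≠ 0 := by positivity
    have h2 : (1 + Real.exp (-xc)) ≠ 0 := by positivity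
    rw [Real.exp_neg] at h2 ⊢
    have h3 : Real.exp xc ≠ 0 := (Real.exp_pos xc).ne'
    field_simp
    ring
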